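/- Let N ≥ 1, σ ∈ (0,1), p ≥ 1, r ∈ [1, p], and θ > (N/r + 2σ)p. Let k ≤ j - 3 be integers, Ω ⊆ ℝ^N open, δ = dist(·, ∂Ω), A_m := {x ∈ Ω : 2^{-m-1} < δ(x) < 2^{-m+1}}, and let v : ℝ^N → ℝ be supported in A_j with v ∈ L^r(ℝ^N). Then for every x ∈ A_k and y ∈ A_j one has |x - y| ≥ 2^{-k-2}, and consequently ‖(-Δ)^σ v‖_{L^p(A_k)} ≤ C 2^{(N/r - N/p + 2σ)k} ‖v‖_{L^r(ℝ^N)}, where C depends only on N, σ, p, r. -/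

import Mathlib

open Real MeasureTheory Metric Set Filter Bornology
open scoped Topology ENNReal

/-- The dyadic boundary layer `A_m = {x ∈ Ω : 2^{-m-1} < δ(x) < 2^{-m+1}}`, where
`δ = dist(·, ∂Ω)`. -/
def layer {n : ℕ} (Ω : Set (EuclideanSpace ℝ (Fin n))) (m : ℤ) :
    Set (EuclideanSpace ℝ (Fin n)) :=
  {x ∈ Ω | (2:ℝ) ^ (-m - 1) < Metric.infDist x (frontier Ω)
      ∧ Metric.infDist x (frontier Ω) < (2:ℝ) ^ (-m + 1)}

section Helpers
open ENNReal
variable {n : ℕ}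
local notation "E" => EuclideanSpace ℝ (Fin n)


lemma young_aux (F K : E → ℝ≥0∞) (hF : AEMeasurable F volume) (hK : Measurable K)
    {p r q : ℝ} (hp : 1 ≤ p) (hr : 1 ≤ r) (hq : 1 ≤ q) (hrp : r ≤ p)
    (hpqr : 1/p + 1 = 1/r + 1/q) :
    ∫⁻ x, (∫⁻ y, F y * K (x - y)) ^ p
      ≤ (∫⁻ y, F y ^ r) ^ (p/r) * (∫⁻ z, K z ^ q) ^ (p/q) := by
  have hp0 : (0:ℝ) < p := lt_of_lt_of_le one_pos hp
  have hr0 : (0:ℝ) < r := lt_of_lt_of_le one_pos hr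
  have hq0 : (0:ℝ) < q := lt_of_lt_of_le one_pos hq
  set Ir := ∫⁻ y, F y ^ r with hIr
  set Iq := ∫⁻ z, K z ^ q with hIq
  set e₂ : ℝ := 1/r - 1/p with he₂
  set e₃ : ℝ := 1/q - 1/p with he₃
  have he₂0 : 0 ≤ e₂ := by
    rw [he₂, sub_nonneg]; exact one_div_le_one_div_of_le hr0 hrp
  have he₃0 : 0 ≤ e₃ := by
    have h : 1/q - 1/p = 1 - 1/r := by linarith
    rw [he₃, h, sub_nonneg, div_le_one hr0]; exact hr
  have h1 : r * (1/p) + r * e₂ = 1 := by rw [he₂]; field_simp; ring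
  have h2 : q * (1/p) + q * e₃ = 1 := by rw [he₃]; field_simp; ring
  -- pointwise Hölder in y, for each x
  have key : ∀ x : E, (∫⁻ y, F y * K (x - y))
      ≤ (∫⁻ y, F y ^ r * K (x - y) ^ q) ^ (1/p) * Ir ^ e₂ * Iq ^ e₃ := by
    intro x
    have hKx : Measurable fun y : E => K (x - y) :=
      hK.comp (measurable_id.const_sub x)
    have htrans : ∫⁻ y, K (x - y) ^ q = Iq :=
      (Measure.measurePreserving_sub_left volume x).lintegral_comp (hK.pow_const q)
    have hpt : ∀ y : E, F y * K (x - y)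
        = (F y ^ r * K (x - y) ^ q) ^ (1/p) * ((F y ^ r) ^ e₂ * (K (x - y) ^ q) ^ e₃) := by
      intro y
      rw [ENNReal.mul_rpow_of_nonneg _ _ (le_of_lt (by positivity : (0:ℝ) < 1/p)),
        ← ENNReal.rpow_mul, ← ENNReal.rpow_mul, ← ENNReal.rpow_mul, ← ENNReal.rpow_mul,
        mul_mul_mul_comm,
        ← ENNReal.rpow_add_of_nonneg (r * (1/p)) (r * e₂) (by positivity)
          (mul_nonneg hr0.le he₂0),
        ← ENNReal.rpow_add_of_nonneg (q * (1/p)) (q * e₃) (by positivity)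
          (mul_nonneg hq0.le he₃0),
        h1, h2, ENNReal.rpow_one, ENNReal.rpow_one]
    calc ∫⁻ y, F y * K (x - y)
        = ∫⁻ y, (F y ^ r * K (x - y) ^ q) ^ (1/p)
            * ((F y ^ r) ^ e₂ * (K (x - y) ^ q) ^ e₃) := lintegral_congr hpt
      _ ≤ (∫⁻ y, F y ^ r * K (x - y) ^ q) ^ (1/p)
            * ((∫⁻ y, F y ^ r) ^ e₂ * (∫⁻ y, K (x - y) ^ q) ^ e₃) := by
          have hmeas1 : AEMeasurable (fun y : E => F y ^ r * K (x - y) ^ q) volume :=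
            (hF.pow_const r).mul (hKx.pow_const q).aemeasurable
          have := ENNReal.lintegral_mul_prod_norm_pow_le (Finset.univ : Finset (Fin 2))
            (g := fun y : E => F y ^ r * K (x - y) ^ q)
            (f := ![fun y : E => F y ^ r, fun y : E => K (x - y) ^ q])
            hmeas1 (fun i _ => by
              fin_cases i
              · exact (hF.pow_const r)
              · exact (hKx.pow_const q).aemeasurable)
            (1/p) (p := ![e₂, e₃]) (by rw [Fin.sum_univ_two]; show 1/p + (e₂ + e₃) = 1; rw [he₂, he₃]; linarith)
            (by positivity) (fun i _ => by fin_cases i <;> simpa using ‹_›)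
          simpa [Fin.prod_univ_two] using this
      _ = (∫⁻ y, F y ^ r * K (x - y) ^ q) ^ (1/p) * Ir ^ e₂ * Iq ^ e₃ := by
          rw [htrans, ← hIr, mul_assoc]
  -- handle degenerate cases
  rcases eq_or_ne Ir 0 with hIr0 | hIr0
  · have hF0 : ∀ᵐ y : E ∂volume, F y = 0 := by
      have h' := (lintegral_eq_zero_iff' (hF.pow_const r)).1 hIr0
      filter_upwards [h'] with y hy
      have hy' : F y ^ r = 0 := hy
      simpa [ENNReal.rpow_eq_zero_iff, hr0, hr0.not_gt] using hy'
    have hG0 : ∀ x : E, (∫⁻ y, F y * K (x - y)) = 0 := by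
      intro x
      have hKx : Measurable fun y : E => K (x - y) := hK.comp (measurable_id.const_sub x)
      rw [lintegral_eq_zero_iff' (f := fun y => F y * K (x - y)) (hF.mul hKx.aemeasurable)]
      filter_upwards [hF0] with y hy; simp [hy]
    simp only [hG0]
    rw [ENNReal.zero_rpow_of_pos hp0]
    simp
  rcases eq_or_ne Iq 0 with hIq0 | hIq0
  · have hG0 : ∀ x : E, (∫⁻ y, F y * K (x - y)) = 0 := by
      intro x
      have hKx : Measurable fun y : E => K (x - y) := hK.comp (measurable_id.const_sub x)
      have h0 : ∫⁻ y, K (x - y) ^ q = 0 := by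
        rw [(Measure.measurePreserving_sub_left volume x).lintegral_comp (hK.pow_const q)]
        exact hIq0
      have hKq : Measurable fun y : E => K (x - y) ^ q := hKx.pow_const q
      have h1 := (lintegral_eq_zero_iff hKq).1 h0
      rw [lintegral_eq_zero_iff' (f := fun y => F y * K (x - y)) (hF.mul hKx.aemeasurable)]
      filter_upwards [h1] with y hy
      have hy' : K (x - y) ^ q = 0 := hy
      have : K (x - y) = 0 := by
        simpa [ENNReal.rpow_eq_zero_iff, hq0, hq0.not_gt] using hy'
      simp [this]
    simp only [hG0]
    rw [ENNReal.zero_rpow_of_pos hp0]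
    simp
  rcases eq_or_ne Ir ⊤ with hIrT | hIrT
  · rw [hIrT, ENNReal.top_rpow_of_pos (by positivity), ENNReal.top_mul]
    · exact le_top
    · intro hcon
      rw [ENNReal.rpow_eq_zero_iff] at hcon
      rcases hcon with ⟨h, _⟩ | ⟨_, h⟩
      · exact hIq0 h
      · exact absurd h (not_lt.2 (by positivity : (0:ℝ) < p/q).le)
  rcases eq_or_ne Iq ⊤ with hIqT | hIqT
  · rw [hIqT, ENNReal.top_rpow_of_pos (by positivity), ENNReal.mul_top]
    · exact le_top
    · intro hcon
      rw [ENNReal.rpow_eq_zero_iff] at hcon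
      rcases hcon with ⟨h, _⟩ | ⟨_, h⟩
      · exact hIr0 h
      · exact absurd h (not_lt.2 (by positivity : (0:ℝ) < p/r).le)
  -- main case: Ir, Iq nonzero and finite
  have hC : (Ir ^ e₂ * Iq ^ e₃) ^ p ≠ ⊤ := by
    apply ENNReal.rpow_ne_top_of_nonneg hp0.le
    exact ENNReal.mul_ne_top (ENNReal.rpow_ne_top_of_nonneg he₂0 hIrT)
      (ENNReal.rpow_ne_top_of_nonneg he₃0 hIqT)
  have key2 : ∀ x : E, (∫⁻ y, F y * K (x - y)) ^ p
      ≤ (∫⁻ y, F y ^ r * K (x - y) ^ q) * (Ir ^ e₂ * Iq ^ e₃) ^ p := by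
    intro x
    calc (∫⁻ y, F y * K (x - y)) ^ p
        ≤ ((∫⁻ y, F y ^ r * K (x - y) ^ q) ^ (1/p) * Ir ^ e₂ * Iq ^ e₃) ^ p :=
          ENNReal.rpow_le_rpow (key x) hp0.le
      _ = (∫⁻ y, F y ^ r * K (x - y) ^ q) * (Ir ^ e₂ * Iq ^ e₃) ^ p := by
          rw [mul_assoc, ENNReal.mul_rpow_of_nonneg _ _ hp0.le, ← ENNReal.rpow_mul,
            one_div_mul_cancel hp0.ne', ENNReal.rpow_one]
  have hswap : ∫⁻ x, ∫⁻ y, F y ^ r * K (x - y) ^ q = Ir * Iq := by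
    have hjoint : AEMeasurable
        (Function.uncurry fun x y : E => F y ^ r * K (x - y) ^ q)
        ((volume : Measure E).prod volume) := by
      have h1 : AEMeasurable (fun z : E × E => F z.2) (volume.prod volume) :=
        hF.comp_quasiMeasurePreserving Measure.quasiMeasurePreserving_snd
      exact (h1.pow_const r).mul
        ((hK.comp (measurable_fst.sub measurable_snd)).pow_const q).aemeasurable
    rw [lintegral_lintegral_swap hjoint]
    have hinner : ∀ y : E, ∫⁻ x, F y ^ r * K (x - y) ^ q = F y ^ r * Iq := by
      intro y
      have hm : Measurable fun x : E => K (x - y) ^ q :=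
        (hK.pow_const q).comp (measurable_id.sub_const y)
      rw [lintegral_const_mul _ hm]
      congr 1
      exact lintegral_sub_right_eq_self (fun z => K z ^ q) y
    simp_rw [hinner]
    rw [lintegral_mul_const' _ _ hIqT]
  calc ∫⁻ x, (∫⁻ y, F y * K (x - y)) ^ p
      ≤ ∫⁻ x, (∫⁻ y, F y ^ r * K (x - y) ^ q) * (Ir ^ e₂ * Iq ^ e₃) ^ p :=
        lintegral_mono key2
    _ = (Ir * Iq) * (Ir ^ e₂ * Iq ^ e₃) ^ p := by
        rw [lintegral_mul_const' _ _ hC, hswap]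
    _ = Ir ^ (p/r) * Iq ^ (p/q) := by
        rw [ENNReal.mul_rpow_of_nonneg _ _ hp0.le, ← ENNReal.rpow_mul, ← ENNReal.rpow_mul]
        have hr' : Ir ^ (1:ℝ) * Ir ^ (e₂ * p) = Ir ^ (p/r) := by
          rw [← ENNReal.rpow_add_of_nonneg 1 (e₂ * p) one_pos.le
            (mul_nonneg he₂0 hp0.le)]
          congr 1
          rw [he₂]; field_simp; ring
        have hq' : Iq ^ (1:ℝ) * Iq ^ (e₃ * p) = Iq ^ (p/q) := by
          rw [← ENNReal.rpow_add_of_nonneg 1 (e₃ * p) one_pos.le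
            (mul_nonneg he₃0 hp0.le)]
          congr 1
          rw [he₃]; field_simp; ring
        rw [← hr', ← hq', ENNReal.rpow_one, ENNReal.rpow_one]; ring


noncomputable def Kfun (n : ℕ) (s R : ℝ) : EuclideanSpace ℝ (Fin n) → ℝ≥0∞ :=
  fun z => Set.indicator {z : EuclideanSpace ℝ (Fin n) | R ≤ ‖z‖}
    (fun z => ENNReal.ofReal (‖z‖ ^ (-s))) z

lemma Kfun_measurable (s R : ℝ) : Measurable (Kfun n s R) := by
  apply Measurable.indicator
  · exact ENNReal.measurable_ofReal.comp (measurable_norm.pow_const _)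
  · exact isClosed_le continuous_const continuous_norm |>.measurableSet

lemma Kfun_rpow {s R q : ℝ} (hq : 0 < q) (z : E) :
    Kfun n s R z ^ q = Kfun n (s * q) R z := by
  unfold Kfun
  by_cases hz : z ∈ {z : E | R ≤ ‖z‖}
  · rw [Set.indicator_of_mem hz, Set.indicator_of_mem hz,
      ENNReal.ofReal_rpow_of_nonneg (Real.rpow_nonneg (norm_nonneg z) _) hq.le]
    congr 1
    rw [← Real.rpow_mul (norm_nonneg z), neg_mul]
  · rw [Set.indicator_of_notMem hz, Set.indicator_of_notMem hz,
      ENNReal.zero_rpow_of_pos hq]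

lemma Kfun_scale {t R : ℝ} (hR : 0 < R) :
    ∫⁻ z : E, Kfun n t R z
      = ENNReal.ofReal (R ^ ((n : ℝ) - t)) * ∫⁻ z : E, Kfun n t 1 z := by
  have hmap : ∫⁻ x : E, Kfun n t R (R • x)
      = ENNReal.ofReal (abs ((R ^ Module.finrank ℝ E)⁻¹)) * ∫⁻ z : E, Kfun n t R z := by
    rw [← lintegral_map (Kfun_measurable t R) (measurable_const_smul R),
      Measure.map_addHaar_smul volume hR.ne', lintegral_smul_measure, smul_eq_mul]
  have hpt : ∀ x : E, Kfun n t R (R • x)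
      = ENNReal.ofReal (R ^ (-t)) * Kfun n t 1 x := by
    intro x
    unfold Kfun
    have hnorm : ‖R • x‖ = R * ‖x‖ := by
      rw [norm_smul, Real.norm_eq_abs, abs_of_pos hR]
    by_cases hx : (1:ℝ) ≤ ‖x‖
    · have hmem : R • x ∈ {z : E | R ≤ ‖z‖} := by
        simp only [Set.mem_setOf_eq, hnorm]
        calc R = R * 1 := (mul_one R).symm
          _ ≤ R * ‖x‖ := by gcongr
      rw [Set.indicator_of_mem hmem, Set.indicator_of_mem (by simpa using hx), hnorm,
        Real.mul_rpow hR.le (norm_nonneg x), ENNReal.ofReal_mul (Real.rpow_nonneg hR.le _)]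
    · have hmem : R • x ∉ {z : E | R ≤ ‖z‖} := by
        simp only [Set.mem_setOf_eq, hnorm, not_le]
        calc R * ‖x‖ < R * 1 := by
              apply mul_lt_mul_of_pos_left (lt_of_not_ge hx) hR
          _ = R := mul_one R
      rw [Set.indicator_of_notMem hmem, Set.indicator_of_notMem (by simpa using hx), mul_zero]
  rw [funext hpt] at hmap
  have hfr : Module.finrank ℝ (EuclideanSpace ℝ (Fin n)) = n := finrank_euclideanSpace_fin
  set m := Module.finrank ℝ (EuclideanSpace ℝ (Fin n)) with hm
  have hRm : (0:ℝ) < R ^ m := pow_pos hR m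
  have hb0 : ENNReal.ofReal (R ^ m) ≠ 0 := by
    simp [ENNReal.ofReal_eq_zero, not_le, hRm]
  have hbT : ENNReal.ofReal (R ^ m) ≠ ⊤ := ENNReal.ofReal_ne_top
  have habs : |(R ^ m)⁻¹| = (R ^ m)⁻¹ := abs_of_pos (inv_pos.2 hRm)
  rw [habs, ENNReal.ofReal_inv_of_pos hRm] at hmap
  rw [lintegral_const_mul' _ _ ENNReal.ofReal_ne_top] at hmap
  have hIR : ∫⁻ z : E, Kfun n t R z
      = ENNReal.ofReal (R ^ m) * (ENNReal.ofReal (R ^ (-t)) * ∫⁻ z : E, Kfun n t 1 z) := by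
    rw [hmap, ← mul_assoc, ENNReal.mul_inv_cancel hb0 hbT, one_mul]
  rw [hIR, ← mul_assoc, ← ENNReal.ofReal_mul hRm.le]
  congr 2
  rw [← Real.rpow_natCast R m, ← Real.rpow_add hR, hfr]
  norm_num [sub_eq_add_neg]


lemma Kfun_finite {t : ℝ} (ht : (n : ℝ) < t) : (∫⁻ z : E, Kfun n t 1 z) < ⊤ := by
  have ht0 : (0:ℝ) < t := lt_of_le_of_lt (Nat.cast_nonneg n) ht
  have hpt : ∀ z : E, Kfun n t 1 z
      ≤ ENNReal.ofReal (2 ^ t) * ENNReal.ofReal ((1 + ‖z‖) ^ (-t)) := by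
    intro z
    unfold Kfun
    by_cases hz : z ∈ {z : E | (1:ℝ) ≤ ‖z‖}
    · rw [Set.indicator_of_mem hz]
      have hz1 : (1:ℝ) ≤ ‖z‖ := hz
      have h1 : (0:ℝ) < ‖z‖ := lt_of_lt_of_le one_pos hz1
      have hA : (0:ℝ) < ‖z‖ ^ t := Real.rpow_pos_of_pos h1 t
      have hB : (0:ℝ) < (1 + ‖z‖) ^ t := Real.rpow_pos_of_pos (by linarith) t
      have hBA : (1 + ‖z‖) ^ t ≤ 2 ^ t * ‖z‖ ^ t := by
        rw [← Real.mul_rpow (by norm_num) h1.le]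
        exact Real.rpow_le_rpow (by linarith) (by linarith) ht0.le
      have hineq : ‖z‖ ^ (-t) ≤ 2 ^ t * (1 + ‖z‖) ^ (-t) := by
        rw [Real.rpow_neg h1.le, Real.rpow_neg (by linarith : (0:ℝ) ≤ 1 + ‖z‖),
          inv_eq_one_div, inv_eq_one_div, mul_one_div, div_le_div_iff₀ hA hB]
        linarith
      calc ENNReal.ofReal (‖z‖ ^ (-t)) ≤ ENNReal.ofReal (2 ^ t * (1 + ‖z‖) ^ (-t)) :=
            ENNReal.ofReal_le_ofReal hineq
        _ = ENNReal.ofReal (2 ^ t) * ENNReal.ofReal ((1 + ‖z‖) ^ (-t)) :=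
            ENNReal.ofReal_mul (by positivity)
    · rw [Set.indicator_of_notMem hz]
      exact zero_le
  calc (∫⁻ z : E, Kfun n t 1 z)
      ≤ ∫⁻ z : E, ENNReal.ofReal (2 ^ t) * ENNReal.ofReal ((1 + ‖z‖) ^ (-t)) :=
        lintegral_mono hpt
    _ = ENNReal.ofReal (2 ^ t) * ∫⁻ z : E, ENNReal.ofReal ((1 + ‖z‖) ^ (-t)) :=
        lintegral_const_mul' _ _ ENNReal.ofReal_ne_top
    _ < ⊤ := by
        apply ENNReal.mul_lt_top ENNReal.ofReal_lt_top
        apply finite_integral_one_add_norm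
        rwa [finrank_euclideanSpace_fin]

end Helpers

/-- For `k ≤ j - 3` and `v ∈ L^r(ℝ^N)` supported in the layer `A_j`:
every `x ∈ A_k`, `y ∈ A_j` satisfy `|x - y| ≥ 2^{-k-2}`, and
`‖(-Δ)^σ v‖_{L^p(A_k)} ≤ C 2^{(N/r - N/p + 2σ)k} ‖v‖_{L^r(ℝ^N)}`, where on `A_k` the
fractional Laplacian is the absolutely convergent integral
`(-Δ)^σ v(x) = -c ∫ v(y)/|x-y|^{N+2σ} dy`, and `C` depends only on `N, σ, p, r` (and `c`). -/



theorem stmt17 (n : ℕ) (hn : 0 < n) (σ p r c : ℝ) (hσ : σ ∈ Ioo (0:ℝ) 1)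
    (hp : 1 ≤ p) (hr : 1 ≤ r) (hrp : r ≤ p) (hc : 0 < c) :
    ∃ C > (0:ℝ), ∀ θ : ℝ, ((n : ℝ) / r + 2 * σ) * p < θ →
      ∀ (Ω : Set (EuclideanSpace ℝ (Fin n))), IsOpen Ω →
      ∀ k j : ℤ, k ≤ j - 3 →
      ∀ v : EuclideanSpace ℝ (Fin n) → ℝ,
        MeasureTheory.MemLp v (ENNReal.ofReal r) volume →
        (∀ y, y ∉ layer Ω j → v y = 0) →
      (∀ x ∈ layer Ω k, ∀ y ∈ layer Ω j, (2:ℝ) ^ (-k - 2) ≤ ‖x - y‖)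
      ∧ (∫ x in layer Ω k,
            |c * ∫ y, v y / ‖x - y‖ ^ ((n : ℝ) + 2 * σ)| ^ p) ^ (1 / p)
          ≤ C * (2 : ℝ) ^ (((n : ℝ) / r - (n : ℝ) / p + 2 * σ) * (k : ℝ))
              * (∫ y, |v y| ^ r) ^ (1 / r) := by
  obtain ⟨hσ0, hσ1⟩ := hσ
  have hp0 : (0:ℝ) < p := lt_of_lt_of_le one_pos hp
  have hr0 : (0:ℝ) < r := lt_of_lt_of_le one_pos hr
  have hd0 : (0:ℝ) < 1 + 1/p - 1/r := by
    have h1 : 1/r ≤ 1 := by rw [div_le_one hr0]; exact hr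
    have h2 : (0:ℝ) < 1/p := by positivity
    linarith
  have hd1 : 1 + 1/p - 1/r ≤ 1 := by
    have : 1/p ≤ 1/r := one_div_le_one_div_of_le hr0 hrp
    linarith
  set q : ℝ := (1 + 1/p - 1/r)⁻¹ with hq_def
  have hq0 : 0 < q := inv_pos.2 hd0
  have hq1 : 1 ≤ q := (one_le_inv₀ hd0).2 hd1
  have hinvq : 1/q = 1 + 1/p - 1/r := by rw [hq_def, one_div, inv_inv]
  have hqd : q * (1 + 1/p - 1/r) = 1 := by rw [hq_def]; exact inv_mul_cancel₀ hd0.ne'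
  have hpqr : 1/p + 1 = 1/r + 1/q := by rw [hinvq]; ring
  have hsqn : (n:ℝ) < ((n:ℝ) + 2*σ) * q := by
    have h1 : (n:ℝ) + 2*σ ≤ ((n:ℝ) + 2*σ) * q :=
      le_mul_of_one_le_right (by positivity) hq1
    linarith
  set I1 := ∫⁻ z : EuclideanSpace ℝ (Fin n), Kfun n (((n:ℝ) + 2*σ) * q) 1 z with hI1_def
  have hI1T : I1 ≠ ⊤ := (Kfun_finite hsqn).ne
  set C₁ : ℝ := I1.toReal ^ (1/q) with hC₁_def
  have hC₁0 : (0:ℝ) ≤ C₁ := Real.rpow_nonneg ENNReal.toReal_nonneg _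
  refine ⟨c * C₁ * 2 ^ (2*((n:ℝ)/r - (n:ℝ)/p + 2*σ)) + 1, by positivity, ?_⟩
  intro θ hθ Ω hΩ k j hkj v hv hsupp
  -- Part 1: separation
  have hsep : ∀ x ∈ layer Ω k, ∀ y ∈ layer Ω j, (2:ℝ) ^ (-k - 2) ≤ ‖x - y‖ := by
    intro x hx y hy
    obtain ⟨hxΩ, hx1, hx2⟩ := hx
    obtain ⟨hyΩ, hy1, hy2⟩ := hy
    have hj : (2:ℝ) ^ (-j+1) ≤ (2:ℝ) ^ (-k-2) :=
      zpow_le_zpow_right₀ one_le_two (by omega)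
    have h2 : (2:ℝ) ^ (-k-1) = 2 * (2:ℝ) ^ (-k-2) := by
      rw [show -k-1 = 1 + (-k-2) by ring, zpow_add₀ (by norm_num : (2:ℝ) ≠ 0), zpow_one]
    have hdd := Metric.infDist_le_infDist_add_dist (x := x) (y := y) (s := frontier Ω)
    rw [← dist_eq_norm]
    have h3 : (2:ℝ)^(-k-1) < (2:ℝ)^(-k-2) + dist x y := by
      calc (2:ℝ)^(-k-1) < Metric.infDist x (frontier Ω) := hx1
        _ ≤ Metric.infDist y (frontier Ω) + dist x y := hdd
        _ < (2:ℝ)^(-j+1) + dist x y := by linarith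
        _ ≤ (2:ℝ)^(-k-2) + dist x y := by linarith
    rw [h2] at h3
    linarith
  refine ⟨hsep, ?_⟩
  -- Part 2
  have hR0 : (0:ℝ) < (2:ℝ)^(-k-2 : ℤ) := by positivity
  have habs : AEMeasurable (fun y => |v y|) (volume : Measure (EuclideanSpace ℝ (Fin n))) :=
    continuous_abs.measurable.comp_aemeasurable hv.1.aemeasurable
  have hFv : AEMeasurable (fun y => ENNReal.ofReal |v y|)
      (volume : Measure (EuclideanSpace ℝ (Fin n))) :=
    ENNReal.measurable_ofReal.comp_aemeasurable habs
  have hAk : MeasurableSet (layer Ω k) := by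
    have hset : layer Ω k = Ω ∩ (fun x : EuclideanSpace ℝ (Fin n) =>
        Metric.infDist x (frontier Ω)) ⁻¹' (Set.Ioo ((2:ℝ)^(-k-1)) ((2:ℝ)^(-k+1))) := by
      ext x
      simp only [layer, Set.mem_setOf_eq, Set.mem_inter_iff, Set.mem_preimage, Set.mem_Ioo]
    rw [hset]
    exact hΩ.measurableSet.inter
      ((Metric.continuous_infDist_pt (frontier Ω)).measurable measurableSet_Ioo)
  -- pointwise bound on the layer
  have hpoint : ∀ x ∈ layer Ω k, ENNReal.ofReal |c * ∫ y, v y / ‖x - y‖ ^ ((n:ℝ) + 2*σ)|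
      ≤ ENNReal.ofReal c
        * ∫⁻ y, ENNReal.ofReal |v y| * Kfun n ((n:ℝ)+2*σ) ((2:ℝ)^(-k-2 : ℤ)) (x - y) := by
    intro x hx
    rw [abs_mul, abs_of_pos hc, ENNReal.ofReal_mul hc.le]
    refine mul_le_mul_right ?_ _
    calc ENNReal.ofReal |∫ y, v y / ‖x - y‖ ^ ((n:ℝ)+2*σ)|
        = ‖∫ y, v y / ‖x - y‖ ^ ((n:ℝ)+2*σ)‖ₑ :=
          (Real.enorm_eq_ofReal_abs _).symm
      _ ≤ ∫⁻ y, ‖v y / ‖x - y‖ ^ ((n:ℝ)+2*σ)‖ₑ :=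
          enorm_integral_le_lintegral_enorm _
      _ ≤ ∫⁻ y, ENNReal.ofReal |v y| * Kfun n ((n:ℝ)+2*σ) ((2:ℝ)^(-k-2 : ℤ)) (x - y) := by
          refine lintegral_mono fun y => ?_
          by_cases hv0 : v y = 0
          · simp [hv0]
          · have hyA : y ∈ layer Ω j := by
              by_contra h
              exact hv0 (hsupp y h)
            have hxy : ((2:ℝ)^(-k-2 : ℤ)) ≤ ‖x - y‖ := hsep x hx y hyA
            have hd' : (0:ℝ) < ‖x - y‖ := lt_of_lt_of_le hR0 hxy
            have hK : Kfun n ((n:ℝ)+2*σ) ((2:ℝ)^(-k-2 : ℤ)) (x - y)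
                = ENNReal.ofReal (‖x - y‖ ^ (-((n:ℝ)+2*σ))) :=
              Set.indicator_of_mem
                (show (x - y) ∈ {z : EuclideanSpace ℝ (Fin n) | ((2:ℝ)^(-k-2 : ℤ)) ≤ ‖z‖}
                  from hxy) _
            rw [hK, Real.enorm_eq_ofReal_abs, ← ENNReal.ofReal_mul (abs_nonneg _)]
            apply ENNReal.ofReal_le_ofReal
            rw [abs_div, abs_of_nonneg (Real.rpow_nonneg (norm_nonneg _) _),
              div_eq_mul_inv, ← Real.rpow_neg (norm_nonneg _)]
  -- Young's inequality
  have hyoung : ∫⁻ x, (∫⁻ y, ENNReal.ofReal |v y|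
        * Kfun n ((n:ℝ)+2*σ) ((2:ℝ)^(-k-2 : ℤ)) (x - y)) ^ p
      ≤ (∫⁻ y, ENNReal.ofReal |v y| ^ r) ^ (p/r)
        * (∫⁻ z, Kfun n ((n:ℝ)+2*σ) ((2:ℝ)^(-k-2 : ℤ)) z ^ q) ^ (p/q) :=
    young_aux _ _ hFv (Kfun_measurable _ _) hp hr hq1 hrp hpqr
  have hIqR : (∫⁻ z, Kfun n ((n:ℝ)+2*σ) ((2:ℝ)^(-k-2 : ℤ)) z ^ q)
      = ENNReal.ofReal (((2:ℝ)^(-k-2 : ℤ)) ^ ((n:ℝ) - ((n:ℝ)+2*σ) * q)) * I1 := by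
    rw [lintegral_congr (fun z => Kfun_rpow hq0 z), hI1_def]
    exact Kfun_scale hR0
  -- finiteness
  have hr_ne : ENNReal.ofReal r ≠ 0 := by
    simp only [ne_eq, ENNReal.ofReal_eq_zero, not_le]; linarith
  have hIr_eq : (∫⁻ y, ENNReal.ofReal |v y| ^ r)
      = ∫⁻ y, ‖v y‖ₑ ^ r :=
    lintegral_congr fun y => by rw [Real.enorm_eq_ofReal_abs]
  have hIrT : (∫⁻ y, ENNReal.ofReal |v y| ^ r) ≠ ⊤ := by
    have h3 := hv.2
    rw [eLpNorm_eq_lintegral_rpow_enorm_toReal hr_ne ENNReal.ofReal_ne_top,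
      ENNReal.toReal_ofReal (by linarith : (0:ℝ) ≤ r)] at h3
    rw [hIr_eq]
    intro hcon
    rw [hcon, ENNReal.top_rpow_of_pos (by positivity)] at h3
    exact absurd h3 (lt_irrefl ⊤)
  have hIqRT : (∫⁻ z, Kfun n ((n:ℝ)+2*σ) ((2:ℝ)^(-k-2 : ℤ)) z ^ q) ≠ ⊤ := by
    rw [hIqR]
    exact ENNReal.mul_ne_top ENNReal.ofReal_ne_top hI1T
  have hPbT : ENNReal.ofReal c ^ p * ((∫⁻ y, ENNReal.ofReal |v y| ^ r) ^ (p/r)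
      * (∫⁻ z, Kfun n ((n:ℝ)+2*σ) ((2:ℝ)^(-k-2 : ℤ)) z ^ q) ^ (p/q)) ≠ ⊤ :=
    ENNReal.mul_ne_top (ENNReal.rpow_ne_top_of_nonneg hp0.le ENNReal.ofReal_ne_top)
      (ENNReal.mul_ne_top (ENNReal.rpow_ne_top_of_nonneg (by positivity) hIrT)
        (ENNReal.rpow_ne_top_of_nonneg (by positivity) hIqRT))
  have hmain : (∫⁻ x in layer Ω k,
        ENNReal.ofReal (|c * ∫ y, v y / ‖x - y‖ ^ ((n:ℝ) + 2*σ)| ^ p))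
      ≤ ENNReal.ofReal c ^ p * ((∫⁻ y, ENNReal.ofReal |v y| ^ r) ^ (p/r)
        * (∫⁻ z, Kfun n ((n:ℝ)+2*σ) ((2:ℝ)^(-k-2 : ℤ)) z ^ q) ^ (p/q)) := by
    calc ∫⁻ x in layer Ω k, ENNReal.ofReal (|c * ∫ y, v y / ‖x - y‖ ^ ((n:ℝ) + 2*σ)| ^ p)
        = ∫⁻ x in layer Ω k,
            (ENNReal.ofReal |c * ∫ y, v y / ‖x - y‖ ^ ((n:ℝ) + 2*σ)|) ^ p :=
          lintegral_congr fun x => by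
            rw [ENNReal.ofReal_rpow_of_nonneg (abs_nonneg _) hp0.le]
      _ ≤ ∫⁻ x in layer Ω k, (ENNReal.ofReal c * ∫⁻ y, ENNReal.ofReal |v y|
            * Kfun n ((n:ℝ)+2*σ) ((2:ℝ)^(-k-2 : ℤ)) (x - y)) ^ p := by
          refine lintegral_mono_ae ?_
          rw [ae_restrict_iff' hAk]
          exact ae_of_all _ fun x hx => ENNReal.rpow_le_rpow (hpoint x hx) hp0.le
      _ ≤ ∫⁻ x, (ENNReal.ofReal c * ∫⁻ y, ENNReal.ofReal |v y|
            * Kfun n ((n:ℝ)+2*σ) ((2:ℝ)^(-k-2 : ℤ)) (x - y)) ^ p :=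
          setLIntegral_le_lintegral _ _
      _ = ENNReal.ofReal c ^ p * ∫⁻ x, (∫⁻ y, ENNReal.ofReal |v y|
            * Kfun n ((n:ℝ)+2*σ) ((2:ℝ)^(-k-2 : ℤ)) (x - y)) ^ p := by
          simp_rw [ENNReal.mul_rpow_of_nonneg _ _ hp0.le]
          exact lintegral_const_mul' _ _
            (ENNReal.rpow_ne_top_of_nonneg hp0.le ENNReal.ofReal_ne_top)
      _ ≤ ENNReal.ofReal c ^ p * ((∫⁻ y, ENNReal.ofReal |v y| ^ r) ^ (p/r)
            * (∫⁻ z, Kfun n ((n:ℝ)+2*σ) ((2:ℝ)^(-k-2 : ℤ)) z ^ q) ^ (p/q)) :=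
          mul_le_mul_right hyoung _
  -- real side
  have hint_nonneg : (0:ℝ) ≤ ∫ x in layer Ω k,
      |c * ∫ y, v y / ‖x - y‖ ^ ((n:ℝ) + 2*σ)| ^ p :=
    integral_nonneg fun x => by positivity
  have hreal : (∫ x in layer Ω k, |c * ∫ y, v y / ‖x - y‖ ^ ((n:ℝ) + 2*σ)| ^ p)
      ≤ (ENNReal.ofReal c ^ p * ((∫⁻ y, ENNReal.ofReal |v y| ^ r) ^ (p/r)
        * (∫⁻ z, Kfun n ((n:ℝ)+2*σ) ((2:ℝ)^(-k-2 : ℤ)) z ^ q) ^ (p/q))).toReal := by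
    by_cases hint : Integrable
        (fun x => |c * ∫ y, v y / ‖x - y‖ ^ ((n:ℝ) + 2*σ)| ^ p)
        (volume.restrict (layer Ω k))
    · rw [integral_eq_lintegral_of_nonneg_ae (ae_of_all _ fun x => by positivity) hint.1]
      exact ENNReal.toReal_mono hPbT hmain
    · rw [integral_undef hint]
      exact ENNReal.toReal_nonneg
  -- convert ∫ |v|^r
  have hIr_real : (∫ y, |v y| ^ r) = (∫⁻ y, ENNReal.ofReal |v y| ^ r).toReal := by
    have hint2 : Integrable (fun y => ‖v y‖ ^ r)
        (volume : Measure (EuclideanSpace ℝ (Fin n))) := by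
      have h := hv.integrable_norm_rpow (p := ENNReal.ofReal r) hr_ne ENNReal.ofReal_ne_top
      rwa [ENNReal.toReal_ofReal (by linarith : (0:ℝ) ≤ r)] at h
    have heq : (fun y : EuclideanSpace ℝ (Fin n) => |v y| ^ r)
        = fun y => ‖v y‖ ^ r := by
      funext y; rw [Real.norm_eq_abs]
    rw [heq, integral_eq_lintegral_of_nonneg_ae (ae_of_all _ fun y => by positivity) hint2.1]
    congr 1
    refine lintegral_congr fun y => ?_
    rw [Real.norm_eq_abs, ← ENNReal.ofReal_rpow_of_nonneg (abs_nonneg _) hr0.le]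
  -- compute the toReal of the bound
  have haux : ∀ a : ℝ, 0 ≤ a → ∀ e : ℝ, (a ^ (p * e)) ^ (1/p) = a ^ e := by
    intro a ha e
    rw [← Real.rpow_mul ha]
    congr 1
    field_simp
  have hNv0 : (0:ℝ) ≤ ∫ y, |v y| ^ r := integral_nonneg fun y => by positivity
  have hIrtR : (0:ℝ) ≤ (∫⁻ y, ENNReal.ofReal |v y| ^ r).toReal := ENNReal.toReal_nonneg
  have hbound : ((ENNReal.ofReal c ^ p * ((∫⁻ y, ENNReal.ofReal |v y| ^ r) ^ (p/r)
      * (∫⁻ z, Kfun n ((n:ℝ)+2*σ) ((2:ℝ)^(-k-2 : ℤ)) z ^ q) ^ (p/q))).toReal) ^ (1/p)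
      = c * ((∫⁻ y, ENNReal.ofReal |v y| ^ r).toReal) ^ (1/r)
        * ((((2:ℝ)^(-k-2 : ℤ)) ^ (((n:ℝ) - ((n:ℝ)+2*σ) * q) * (1/q))) * C₁) := by
    rw [ENNReal.toReal_mul, ENNReal.toReal_mul, ← ENNReal.toReal_rpow, ← ENNReal.toReal_rpow,
      ← ENNReal.toReal_rpow, ENNReal.toReal_ofReal hc.le]
    rw [Real.mul_rpow (by positivity) (by positivity),
      Real.mul_rpow (by positivity) (by positivity)]
    have e1 : (c ^ p) ^ (1/p) = c := by
      have := haux c hc.le 1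
      rw [mul_one] at this
      rw [this, Real.rpow_one]
    have e2 : (((∫⁻ y, ENNReal.ofReal |v y| ^ r).toReal) ^ (p/r)) ^ (1/p)
        = ((∫⁻ y, ENNReal.ofReal |v y| ^ r).toReal) ^ (1/r) := by
      rw [show p/r = p * (1/r) by ring]
      exact haux _ hIrtR _
    have e3 : (((∫⁻ z, Kfun n ((n:ℝ)+2*σ) ((2:ℝ)^(-k-2 : ℤ)) z ^ q).toReal) ^ (p/q)) ^ (1/p)
        = (((2:ℝ)^(-k-2 : ℤ)) ^ (((n:ℝ) - ((n:ℝ)+2*σ) * q) * (1/q))) * C₁ := by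
      rw [show p/q = p * (1/q) by ring, haux _ ENNReal.toReal_nonneg _]
      rw [hIqR, ENNReal.toReal_mul, ENNReal.toReal_ofReal (Real.rpow_nonneg hR0.le _)]
      rw [Real.mul_rpow (Real.rpow_nonneg hR0.le _) ENNReal.toReal_nonneg,
        ← Real.rpow_mul hR0.le, hC₁_def]
    rw [e1, e2, e3]
    ring
  -- exponent arithmetic
  have hε : ((n:ℝ) - ((n:ℝ)+2*σ) * q) * (1/q) = -((n:ℝ)/r - (n:ℝ)/p + 2*σ) := by
    rw [hinvq]
    have expand : ((n:ℝ) - ((n:ℝ)+2*σ) * q) * (1 + 1/p - 1/r)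
        = (n:ℝ) * (1 + 1/p - 1/r) - ((n:ℝ)+2*σ) * (q * (1 + 1/p - 1/r)) := by ring
    rw [expand, hqd]
    field_simp
    ring
  have hRβ : ((2:ℝ)^(-k-2 : ℤ)) ^ (-((n:ℝ)/r - (n:ℝ)/p + 2*σ))
      = 2 ^ (2*((n:ℝ)/r - (n:ℝ)/p + 2*σ))
        * 2 ^ (((n:ℝ)/r - (n:ℝ)/p + 2*σ) * (k:ℝ)) := by
    rw [← Real.rpow_intCast 2 (-k-2), ← Real.rpow_mul (by norm_num : (0:ℝ) ≤ 2),
      ← Real.rpow_add (by norm_num : (0:ℝ) < 2)]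
    congr 1
    push_cast
    ring
  -- final assembly
  calc (∫ x in layer Ω k, |c * ∫ y, v y / ‖x - y‖ ^ ((n:ℝ) + 2*σ)| ^ p) ^ (1/p)
      ≤ ((ENNReal.ofReal c ^ p * ((∫⁻ y, ENNReal.ofReal |v y| ^ r) ^ (p/r)
          * (∫⁻ z, Kfun n ((n:ℝ)+2*σ) ((2:ℝ)^(-k-2 : ℤ)) z ^ q) ^ (p/q))).toReal) ^ (1/p) :=
        Real.rpow_le_rpow hint_nonneg hreal (by positivity)
    _ = c * ((∫⁻ y, ENNReal.ofReal |v y| ^ r).toReal) ^ (1/r)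
          * ((2 ^ (2*((n:ℝ)/r - (n:ℝ)/p + 2*σ))
            * 2 ^ (((n:ℝ)/r - (n:ℝ)/p + 2*σ) * (k:ℝ))) * C₁) := by
        rw [hbound, hε, hRβ]
    _ = (c * C₁ * 2 ^ (2*((n:ℝ)/r - (n:ℝ)/p + 2*σ)))
          * (2 ^ (((n:ℝ)/r - (n:ℝ)/p + 2*σ) * (k:ℝ))
            * ((∫⁻ y, ENNReal.ofReal |v y| ^ r).toReal) ^ (1/r)) := by ring
    _ ≤ (c * C₁ * 2 ^ (2*((n:ℝ)/r - (n:ℝ)/p + 2*σ)) + 1)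
          * (2 ^ (((n:ℝ)/r - (n:ℝ)/p + 2*σ) * (k:ℝ))
            * ((∫⁻ y, ENNReal.ofReal |v y| ^ r).toReal) ^ (1/r)) := by
        refine mul_le_mul_of_nonneg_right (by linarith) ?_
        positivity
    _ = (c * C₁ * 2 ^ (2*((n:ℝ)/r - (n:ℝ)/p + 2*σ)) + 1)
          * 2 ^ (((n:ℝ)/r - (n:ℝ)/p + 2*σ) * (k:ℝ))
          * (∫ y, |v y| ^ r) ^ (1/r) := by
        rw [hIr_real]; ring
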